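/- Let X be a metric space, let φ : X × [0,∞) → X be continuous, and let C^g : X → [0,∞) be lower semicontinuous. Endow [0,∞] with its usual topology (the one-point compactification of [0,∞)). Then the map (x,θ) ↦ ∫_{(0,θ]} C^g(φ(x,u)) du, with values in [0,∞] (where for θ = ∞ the integral is taken over (0,∞)), is lower semicontinuous on X × [0,∞]. -/

import Mathlib

open MeasureTheory Set ENNReal NNReal Filter Topology

/-- Let `X` be a metric space, `φ : X × [0,∞) → X` continuous, and
`C^g : X → [0,∞)` lower semicontinuous.  Then the map
`(x,θ) ↦ ∫_{(0,θ]} C^g(φ(x,u)) du`, with values in `[0,∞]` (the integral being over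
`(0,∞)` when `θ = ∞`), is lower semicontinuous on `X × [0,∞]`. -/
theorem stmt_4 {X : Type*} [MetricSpace X] (φ : X → ℝ → X) (Cg : X → ℝ≥0)
    (hφ : ContinuousOn (fun p : X × ℝ => φ p.1 p.2) (univ ×ˢ Ici (0 : ℝ)))
    (hCg : LowerSemicontinuous Cg) :
    LowerSemicontinuous (fun p : X × ℝ≥0∞ =>
      ∫⁻ u in {u : ℝ | 0 < u ∧ ENNReal.ofReal u ≤ p.2},
        (Cg (φ p.1 u) : ℝ≥0∞) ∂volume) := by
  borelize X
  have hCg' : LowerSemicontinuous (fun x => (Cg x : ℝ≥0∞)) :=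
    ENNReal.continuous_coe.comp_lowerSemicontinuous hCg
      (fun a b h => ENNReal.coe_le_coe.2 h)
  set S : ℝ≥0∞ → Set ℝ := fun θ => {u : ℝ | 0 < u ∧ ENNReal.ofReal u < θ} with hSdef
  have hSmeas : ∀ θ, MeasurableSet (S θ) := by
    intro θ
    have : S θ = Ioi 0 ∩ ENNReal.ofReal ⁻¹' (Iio θ) := rfl
    rw [this]
    exact measurableSet_Ioi.inter (ENNReal.measurable_ofReal measurableSet_Iio)
  -- the ≤-integral equals the <-integral
  have hFG : ∀ p : X × ℝ≥0∞,
      (∫⁻ u in {u : ℝ | 0 < u ∧ ENNReal.ofReal u ≤ p.2},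
        (Cg (φ p.1 u) : ℝ≥0∞) ∂volume)
      = ∫⁻ u in S p.2, (Cg (φ p.1 u) : ℝ≥0∞) ∂volume := by
    intro p
    apply setLIntegral_congr
    rw [MeasureTheory.ae_eq_set]
    constructor
    · refine measure_mono_null ?_ (measure_singleton p.2.toReal)
      rintro u ⟨⟨hu0, hule⟩, hnot⟩
      have heq : ENNReal.ofReal u = p.2 := le_antisymm hule (by
        by_contra h
        exact hnot ⟨hu0, lt_of_not_ge h⟩)
      have hfin : p.2 ≠ ⊤ := by
        rw [← heq]; exact ENNReal.ofReal_ne_top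
      have : u = p.2.toReal := by
        rw [← heq, ENNReal.toReal_ofReal hu0.le]
      simpa [Set.mem_singleton_iff] using this
    · refine measure_mono_null ?_ (measure_empty)
      rintro u ⟨⟨hu0, hult⟩, hnot⟩
      exact hnot ⟨hu0, hult.le⟩
  have hfun : (fun p : X × ℝ≥0∞ =>
      ∫⁻ u in {u : ℝ | 0 < u ∧ ENNReal.ofReal u ≤ p.2},
        (Cg (φ p.1 u) : ℝ≥0∞) ∂volume)
      = fun p : X × ℝ≥0∞ => ∫⁻ u in S p.2, (Cg (φ p.1 u) : ℝ≥0∞) ∂volume :=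
    funext hFG
  rw [hfun]
  -- now show lower semicontinuity of the <-integral
  rw [lowerSemicontinuous_iff_isClosed_preimage]
  intro c
  apply IsSeqClosed.isClosed
  intro q p hmem htend
  simp only [Set.mem_preimage, Set.mem_Iic] at hmem ⊢
  -- indicator functions
  set g : ℕ → ℝ → ℝ≥0∞ := fun n u =>
    (S (q n).2).indicator (fun u => (Cg (φ (q n).1 u) : ℝ≥0∞)) u with hgdef
  have hGeq : ∀ r : X × ℝ≥0∞,
      (∫⁻ u in S r.2, (Cg (φ r.1 u) : ℝ≥0∞) ∂volume)
      = ∫⁻ u, (S r.2).indicator (fun u => (Cg (φ r.1 u) : ℝ≥0∞)) u ∂volume :=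
    fun r => (lintegral_indicator (hSmeas r.2) _).symm
  -- a.e.-measurability of each g n
  have hmeas : ∀ r : X × ℝ≥0∞,
      AEMeasurable ((S r.2).indicator (fun u => (Cg (φ r.1 u) : ℝ≥0∞))) volume := by
    intro r
    rw [aemeasurable_indicator_iff (hSmeas r.2)]
    have hψ : ContinuousOn (fun u : ℝ => φ r.1 u) (Ici 0) := by
      have : (fun u : ℝ => φ r.1 u) = (fun p : X × ℝ => φ p.1 p.2) ∘ (fun u => (r.1, u)) := rfl
      rw [this]
      exact hφ.comp (Continuous.continuousOn (by fun_prop))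
        (fun u hu => ⟨Set.mem_univ _, hu⟩)
    have hsub : S r.2 ⊆ Ici 0 := fun u hu => hu.1.le
    have h1 : AEMeasurable (fun u : ℝ => φ r.1 u) (volume.restrict (S r.2)) :=
      (hψ.aemeasurable measurableSet_Ici).mono_measure
        (Measure.restrict_mono hsub le_rfl)
    exact (measurable_coe_nnreal_ennreal.comp hCg.measurable).comp_aemeasurable h1
  -- pointwise liminf bound
  have hpt : ∀ u : ℝ,
      (S p.2).indicator (fun u => (Cg (φ p.1 u) : ℝ≥0∞)) u ≤ liminf (fun n => g n u) atTop := by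
    intro u
    by_cases hu : u ∈ S p.2
    · rw [Set.indicator_of_mem hu]
      obtain ⟨hu0, hult⟩ := hu
      have hx : Tendsto (fun n => (q n).1) atTop (𝓝 p.1) :=
        (continuous_fst.tendsto p).comp htend
      have hθ : ∀ᶠ n in atTop, ENNReal.ofReal u < (q n).2 :=
        ((continuous_snd.tendsto p).comp htend) (Ioi_mem_nhds hult)
      have hca : ContinuousAt (fun r : X × ℝ => φ r.1 r.2) (p.1, u) := by
        apply hφ.continuousAt
        refine Filter.mem_of_superset (prod_mem_nhds Filter.univ_mem (Ioi_mem_nhds hu0)) ?_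
        exact Set.prod_mono le_rfl Set.Ioi_subset_Ici_self
      have hφt : Tendsto (fun n => φ (q n).1 u) atTop (𝓝 (φ p.1 u)) :=
        hca.tendsto.comp (hx.prodMk_nhds tendsto_const_nhds)
      rw [le_liminf_iff]
      intro b hb
      have hev : ∀ᶠ n in atTop, b < (Cg (φ (q n).1 u) : ℝ≥0∞) := by
        have := hCg' (φ p.1 u) b hb
        exact hφt.eventually this
      filter_upwards [hev, hθ] with n hn hθn
      have hmemn : u ∈ S (q n).2 := ⟨hu0, hθn⟩
      show b < (S (q n).2).indicator (fun u => (Cg (φ (q n).1 u) : ℝ≥0∞)) u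
      rwa [Set.indicator_of_mem hmemn]
    · rw [Set.indicator_of_notMem hu]
      exact zero_le
  -- Fatou
  calc (∫⁻ u in S p.2, (Cg (φ p.1 u) : ℝ≥0∞) ∂volume)
      = ∫⁻ u, (S p.2).indicator (fun u => (Cg (φ p.1 u) : ℝ≥0∞)) u ∂volume := hGeq p
    _ ≤ ∫⁻ u, liminf (fun n => g n u) atTop ∂volume := lintegral_mono hpt
    _ ≤ liminf (fun n => ∫⁻ u, g n u ∂volume) atTop :=
        lintegral_liminf_le' (fun n => hmeas (q n))
    _ = liminf (fun n => ∫⁻ u in S (q n).2, (Cg (φ (q n).1 u) : ℝ≥0∞) ∂volume) atTop := by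
        simp only [hgdef]
        congr 1
        exact funext fun n => (hGeq (q n)).symm
    _ ≤ c := by
        refine liminf_le_of_frequently_le' ?_
        exact Filter.Eventually.frequently (Filter.Eventually.of_forall hmem)
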